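/- arXiv:2101.12179 — 2 statements merged into one kernel-verified Lean document; each statement's English description precedes it below -/
import Mathlib

section
/- For every integer k ≥ 0, every strictly increasing knot vector ξ = (ξ_1, …, ξ_{k+2}) with 0 ≤ ξ_1 < ξ_2 < … < ξ_{k+2} ≤ 1, every 1 ≤ p, q < ∞ and every α with 0 < α < k + 1/p, the B-spline basis function B_k(·; ξ) belongs to the Besov space B^α_{p,q}([0,1]); that is, B_k(·; ξ) restricted to [0,1] lies in L^p([0,1]) and its Besov seminorm |B_k(·; ξ)|_{B^α_{p,q}} is finite. (Theorem 1 of the paper.) -/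
open scoped fwdDiff


open MeasureTheory Set
open scoped ENNReal

/-- B-spline basis function of degree `k` with knot vector `ξ = (ξ₀, …, ξ_{k+1})`
(0-indexed), defined by the Cox–de Boor recursion. -/
noncomputable def bspline : (k : ℕ) → (Fin (k + 2) → ℝ) → ℝ → ℝ
  | 0, ξ, x => if ξ 0 ≤ x ∧ x < ξ 1 then 1 else 0
  | (m + 1), ξ, x =>
      (x - ξ 0) / (ξ ⟨m + 1, by omega⟩ - ξ 0) * bspline m (fun i => ξ i.castSucc) x
      + (ξ (Fin.last (m + 2)) - x) / (ξ (Fin.last (m + 2)) - ξ 1) *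
          bspline m (fun i => ξ i.succ) x

/-- The `r`-th order forward finite difference `Δ_h^r f (x)`. -/
noncomputable def finiteDiff (r : ℕ) (h : ℝ) (f : ℝ → ℝ) (x : ℝ) : ℝ :=
  ∑ j ∈ Finset.range (r + 1), (r.choose j : ℝ) * (-1 : ℝ) ^ (r - j) * f (x + j * h)

/-- The `r`-th order modulus of smoothness `ω_r(f, t)_p` on `[0,1]`. -/
noncomputable def modSmooth (p : ℝ) (r : ℕ) (f : ℝ → ℝ) (t : ℝ) : ℝ :=
  sSup ((fun h => (∫ x in Set.Ioo (0 : ℝ) (1 - r * h), |finiteDiff r h f x| ^ p) ^ (1 / p)) ''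
    Set.Ioc 0 t)

/-- The smallest integer `r` with `r > α` (for `α > 0`). -/
noncomputable def besovR (α : ℝ) : ℕ := ⌊α⌋₊ + 1

/-- The Besov seminorm `|f|_{B^α_{p,q}}` on `[0,1]`, valued in `ℝ≥0∞`. -/
noncomputable def besovSeminorm (p q α : ℝ) (f : ℝ → ℝ) : ℝ≥0∞ :=
  (∫⁻ t in Set.Ioi (0 : ℝ),
      ENNReal.ofReal ((t ^ (-α) * modSmooth p (besovR α) f t) ^ q / t)) ^ (1 / q)

/-- Membership in the Besov space `B^α_{p,q}([0,1])`: `f ∈ L^p([0,1])` and the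
Besov seminorm is finite. -/
def memBesov (p q α : ℝ) (f : ℝ → ℝ) : Prop :=
  MemLp f (ENNReal.ofReal p) (volume.restrict (Set.Icc (0 : ℝ) 1)) ∧
  besovSeminorm p q α f < ⊤


section BsplineAux

lemma fwdDiff_iter_zero_fun (h : ℝ) (r : ℕ) (x : ℝ) : (fwdDiff h)^[r] (fun _ => (0:ℝ)) x = 0 := by
  induction r generalizing x with
  | zero => simp
  | succ r ih =>
    rw [Function.iterate_succ_apply]
    have : fwdDiff h (fun _ => (0:ℝ)) = fun _ => (0:ℝ) := by
      funext y; simp [fwdDiff]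
    rw [this, ih]

open Polynomial in
lemma fwdDiff_iter_poly_eq_zero (h : ℝ) : ∀ (r : ℕ) (P : ℝ[X]), P.natDegree < r → ∀ x : ℝ,
    (fwdDiff h)^[r] (fun y => P.eval y) x = 0 := by
  intro r
  induction r with
  | zero => intro P hP; omega
  | succ r ih =>
    intro P hP x
    rw [Function.iterate_succ_apply]
    have hD : fwdDiff h (fun y => P.eval y) = fun y => (P.comp (X + C h) - P).eval y := by
      funext y; simp [fwdDiff, eval_comp, add_comm]
    rw [hD]
    set Q := P.comp (X + C h) - P with hQdef
    by_cases hQ0 : Q = 0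
    · rw [hQ0]; simpa using fwdDiff_iter_zero_fun h r x
    by_cases h0 : P.natDegree = 0
    · exfalso
      obtain ⟨c, rfl⟩ := natDegree_eq_zero.mp h0
      simp [hQdef] at hQ0
    have hP0 : P ≠ 0 := fun hc => h0 (by simp [hc])
    have hnd : (P.comp (X + C h)).natDegree = P.natDegree := by
      rw [natDegree_comp, natDegree_X_add_C, mul_one]
    have hc0 : P.comp (X + C h) ≠ 0 := by
      intro hc
      rw [hc, natDegree_zero] at hnd
      exact h0 hnd.symm
    have hdeg : (P.comp (X + C h)).degree = P.degree := by
      rw [degree_eq_natDegree hc0, degree_eq_natDegree hP0, hnd]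
    have hlt : Q.degree < P.degree := by
      rw [← hdeg]
      refine degree_sub_lt hdeg hc0 ?_
      rw [leadingCoeff_comp (by simp), leadingCoeff_X_add_C, one_pow, mul_one]
    have : Q.natDegree < P.natDegree := natDegree_lt_natDegree hQ0 hlt
    exact ih Q (by omega) x

lemma alt_sum_pow {r m : ℕ} (hm : m < r) :
    ∑ j ∈ Finset.range (r+1), (r.choose j : ℝ) * (-1:ℝ)^(r-j) * (j:ℝ)^m = 0 := by
  have := fwdDiff_iter_poly_eq_zero (1:ℝ) r (Polynomial.X ^ m)
    (by simpa using hm) 0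
  rw [fwdDiff_iter_eq_sum_shift] at this
  rw [← this]
  apply Finset.sum_congr rfl
  intro j hj
  simp only [zsmul_eq_mul, nsmul_eq_mul, smul_eq_mul, Polynomial.eval_pow, Polynomial.eval_X]
  push_cast
  ring

noncomputable def tpow (k : ℕ) (a : ℝ) (x : ℝ) : ℝ := if x < a then (a - x)^k else 0

lemma measurable_tpow (k : ℕ) (a : ℝ) : Measurable (tpow k a) := by
  unfold tpow
  exact Measurable.ite (measurableSet_lt measurable_id measurable_const)
    ((measurable_const.sub measurable_id).pow_const k) measurable_const

lemma abs_tpow_le {k : ℕ} {a x c : ℝ} (hc : 0 ≤ c) (hax : a - x ≤ c) : |tpow k a x| ≤ c^k := by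
  unfold tpow; split
  · next hlt =>
    rw [abs_of_nonneg (pow_nonneg (by linarith) _)]
    exact pow_le_pow_left₀ (by linarith) hax _
  · simpa using pow_nonneg hc k

lemma finiteDiff_tpow_of_ge {k r : ℕ} {h a x : ℝ} (hh : 0 ≤ h) (hax : a ≤ x) :
    finiteDiff r h (tpow k a) x = 0 := by
  unfold finiteDiff
  apply Finset.sum_eq_zero
  intro j _
  have : ¬ (x + j*h < a) := by
    have : (0:ℝ) ≤ j * h := mul_nonneg (Nat.cast_nonneg _) hh
    push_neg; linarith
  rw [tpow, if_neg this, mul_zero]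

lemma finiteDiff_tpow_poly {k r : ℕ} {h a x : ℝ} (hh : 0 ≤ h) (hlt : x + r*h < a) :
    finiteDiff r h (tpow k a) x
      = ∑ m ∈ Finset.range (k+1), (k.choose m : ℝ) * (a-x)^(k-m) * (-h)^m
          * (∑ j ∈ Finset.range (r+1), (r.choose j : ℝ) * (-1:ℝ)^(r-j) * (j:ℝ)^m) := by
  unfold finiteDiff
  have key : ∀ j ∈ Finset.range (r+1), (r.choose j : ℝ) * (-1:ℝ)^(r-j) * tpow k a (x + j*h)
      = ∑ m ∈ Finset.range (k+1),
          (r.choose j : ℝ) * (-1:ℝ)^(r-j) * ((k.choose m : ℝ) * (a-x)^(k-m) * (-h)^m * (j:ℝ)^m) := by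
    intro j hj
    have hjr : (j:ℝ) ≤ r := by exact_mod_cast Nat.lt_succ_iff.mp (Finset.mem_range.mp hj)
    have hj' : (j:ℝ) * h ≤ r * h := mul_le_mul_of_nonneg_right hjr hh
    have hxa : x + j*h < a := lt_of_le_of_lt (by linarith) hlt
    rw [show tpow k a (x + j*h) = (a - (x + j*h))^k from if_pos hxa]
    have expand : (a - (x + j*h))^k
        = ∑ m ∈ Finset.range (k+1), ((-h)*j)^m * (a-x)^(k-m) * (k.choose m : ℝ) := by
      rw [show a - (x + j*h) = (-h)*(j:ℝ) + (a - x) by ring]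
      exact add_pow _ _ _
    rw [expand, Finset.mul_sum]
    apply Finset.sum_congr rfl; intro m _; rw [mul_pow]; ring
  rw [Finset.sum_congr rfl key, Finset.sum_comm]
  apply Finset.sum_congr rfl; intro m _
  rw [Finset.mul_sum]
  apply Finset.sum_congr rfl; intro j _; ring

lemma finiteDiff_tpow_of_klt {k r : ℕ} {h a x : ℝ} (hkr : k < r) (hh : 0 ≤ h)
    (hlt : x + r*h < a) : finiteDiff r h (tpow k a) x = 0 := by
  rw [finiteDiff_tpow_poly hh hlt]
  apply Finset.sum_eq_zero
  intro m hm
  rw [alt_sum_pow (lt_of_le_of_lt (Nat.lt_succ_iff.mp (Finset.mem_range.mp hm)) hkr), mul_zero]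

lemma abs_finiteDiff_tpow_transition {k r : ℕ} {h a x : ℝ} (hh : 0 ≤ h) (hx : a - r*h ≤ x) :
    |finiteDiff r h (tpow k a) x| ≤ 2^r * (r*h)^k := by
  have hrh : (0:ℝ) ≤ r*h := mul_nonneg (Nat.cast_nonneg _) hh
  calc |finiteDiff r h (tpow k a) x|
      ≤ ∑ j ∈ Finset.range (r+1), |(r.choose j : ℝ) * (-1:ℝ)^(r-j) * tpow k a (x + j*h)| :=
        Finset.abs_sum_le_sum_abs _ _
    _ ≤ ∑ j ∈ Finset.range (r+1), (r.choose j : ℝ) * (r*h)^k := by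
        apply Finset.sum_le_sum
        intro j _
        rw [abs_mul, abs_mul, abs_pow, abs_neg, abs_one, one_pow, mul_one,
          Nat.abs_cast]
        apply mul_le_mul_of_nonneg_left _ (Nat.cast_nonneg _)
        apply abs_tpow_le hrh
        have : (0:ℝ) ≤ j * h := mul_nonneg (Nat.cast_nonneg _) hh
        linarith
    _ = 2^r * (r*h)^k := by
        rw [← Finset.sum_mul, ← Nat.cast_sum, Nat.sum_range_choose]
        push_cast; ring

lemma abs_finiteDiff_tpow_poly_le {k r : ℕ} {h a x : ℝ} (hh : 0 ≤ h) (hh1 : h ≤ 1)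
    (hlt : x + r*h < a) (hax : a - x ≤ 1) :
    |finiteDiff r h (tpow k a) x| ≤ 2^r * ((r:ℝ)+1)^k * h^r := by
  have hxa : 0 ≤ a - x := by
    have : (0:ℝ) ≤ r*h := mul_nonneg (Nat.cast_nonneg _) hh
    linarith
  rw [finiteDiff_tpow_poly hh hlt]
  calc |∑ m ∈ Finset.range (k+1), (k.choose m : ℝ) * (a-x)^(k-m) * (-h)^m
          * (∑ j ∈ Finset.range (r+1), (r.choose j : ℝ) * (-1:ℝ)^(r-j) * (j:ℝ)^m)|
      ≤ ∑ m ∈ Finset.range (k+1), |(k.choose m : ℝ) * (a-x)^(k-m) * (-h)^m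
          * (∑ j ∈ Finset.range (r+1), (r.choose j : ℝ) * (-1:ℝ)^(r-j) * (j:ℝ)^m)| :=
        Finset.abs_sum_le_sum_abs _ _
    _ ≤ ∑ m ∈ Finset.range (k+1), (k.choose m : ℝ) * (r:ℝ)^m * (2^r * h^r) := by
        apply Finset.sum_le_sum
        intro m _
        rcases lt_or_ge m r with hmr | hmr
        · rw [alt_sum_pow hmr, mul_zero, abs_zero]
          positivity
        · rw [abs_mul, abs_mul, abs_mul]
          simp only [abs_pow, abs_neg, Nat.abs_cast, abs_of_nonneg hxa]
          have h1 : (a-x)^(k-m) ≤ 1 := pow_le_one₀ hxa hax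
          have h2 : |h|^m ≤ h^r := by
            rw [abs_of_nonneg hh]
            exact pow_le_pow_of_le_one hh hh1 hmr
          have h3 : |∑ j ∈ Finset.range (r+1), (r.choose j : ℝ) * (-1:ℝ)^(r-j) * (j:ℝ)^m|
              ≤ 2^r * (r:ℝ)^m := by
            calc |∑ j ∈ Finset.range (r+1), (r.choose j : ℝ) * (-1:ℝ)^(r-j) * (j:ℝ)^m|
                ≤ ∑ j ∈ Finset.range (r+1), |(r.choose j : ℝ) * (-1:ℝ)^(r-j) * (j:ℝ)^m| :=
                  Finset.abs_sum_le_sum_abs _ _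
              _ ≤ ∑ j ∈ Finset.range (r+1), (r.choose j : ℝ) * (r:ℝ)^m := by
                  apply Finset.sum_le_sum
                  intro j hj
                  have hjr : (j:ℝ) ≤ r := by
                    exact_mod_cast Nat.lt_succ_iff.mp (Finset.mem_range.mp hj)
                  rw [abs_mul, abs_mul, abs_pow, abs_neg, abs_one, one_pow, mul_one,
                    Nat.abs_cast, abs_pow, Nat.abs_cast]
                  apply mul_le_mul_of_nonneg_left _ (Nat.cast_nonneg _)
                  exact pow_le_pow_left₀ (Nat.cast_nonneg _) hjr _
              _ = 2^r * (r:ℝ)^m := by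
                  rw [← Finset.sum_mul, ← Nat.cast_sum, Nat.sum_range_choose]
                  push_cast; ring
          calc (k.choose m : ℝ) * (a-x)^(k-m) * |h|^m * |∑ j ∈ Finset.range (r+1),
                  (r.choose j : ℝ) * (-1:ℝ)^(r-j) * (j:ℝ)^m|
              ≤ (k.choose m : ℝ) * 1 * h^r * (2^r * (r:ℝ)^m) := by
                apply mul_le_mul _ h3 (abs_nonneg _) (by positivity)
                apply mul_le_mul _ h2 (pow_nonneg (abs_nonneg _) _) (by positivity)
                exact mul_le_mul_of_nonneg_left h1 (Nat.cast_nonneg _)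
            _ = (k.choose m : ℝ) * (r:ℝ)^m * (2^r * h^r) := by ring
    _ = 2^r * ((r:ℝ)+1)^k * h^r := by
        rw [← Finset.sum_mul]
        have : ∑ m ∈ Finset.range (k+1), (k.choose m : ℝ) * (r:ℝ)^m = ((r:ℝ)+1)^k := by
          rw [add_pow]
          apply Finset.sum_congr rfl; intro m _; rw [one_pow]; ring
        rw [this]; ring

noncomputable def bcoef (k : ℕ) (ξ : Fin (k+2) → ℝ) (i : Fin (k+2)) : ℝ :=
  (ξ (Fin.last (k+1)) - ξ 0) * ∏ j ∈ Finset.univ.erase i, (ξ i - ξ j)⁻¹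

lemma tpow_succ (m : ℕ) (a x : ℝ) : (a - x) * tpow m a x = tpow (m+1) a x := by
  unfold tpow
  split
  · rw [pow_succ]; ring
  · ring

lemma bspline_rep (k : ℕ) : ∀ (ξ : Fin (k+2) → ℝ), StrictMono ξ →
    ∀ x, bspline k ξ x = ∑ i, bcoef k ξ i * tpow k (ξ i) x := by
  induction k with
  | zero =>
    intro ξ hξ x
    have h01 : ξ 0 < ξ 1 := hξ (by decide)
    have hne : ξ 0 - ξ 1 ≠ 0 := by intro hc; linarith
    have e0 : (Finset.univ.erase (0 : Fin 2)) = {1} := by decide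
    have e1 : (Finset.univ.erase (1 : Fin 2)) = {0} := by decide
    have hl : (Fin.last 1) = (1 : Fin 2) := rfl
    rw [Fin.sum_univ_two]
    unfold bcoef
    rw [e0, e1, Finset.prod_singleton, Finset.prod_singleton, hl]
    have c0 : (ξ 1 - ξ 0) * (ξ 0 - ξ 1)⁻¹ = -1 := by
      rw [show ξ 1 - ξ 0 = -(ξ 0 - ξ 1) by ring, neg_mul, mul_inv_cancel₀ hne]
    have c1 : (ξ 1 - ξ 0) * (ξ 1 - ξ 0)⁻¹ = 1 := mul_inv_cancel₀ (by intro hc; linarith)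
    rw [c0, c1, bspline]
    simp only [tpow, pow_zero]
    rcases lt_or_ge x (ξ 0) with hx0 | hx0
    · rw [if_neg (fun hc => absurd hc.1 (not_le.mpr hx0)), if_pos hx0, if_pos (hx0.trans h01)]
      ring
    · rcases lt_or_ge x (ξ 1) with hx1 | hx1
      · rw [if_pos ⟨hx0, hx1⟩, if_neg (not_lt.mpr hx0), if_pos hx1]
        ring
      · rw [if_neg (fun hc => absurd hc.2 (not_lt.mpr hx1)), if_neg (not_lt.mpr hx0),
          if_neg (not_lt.mpr hx1)]
        ring
  | succ m ih =>
    intro ξ hξ x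
    have hinj : Function.Injective ξ := hξ.injective
    have hne : ∀ i j : Fin (m+3), i ≠ j → ξ i - ξ j ≠ 0 :=
      fun i j hij => sub_ne_zero.mpr (fun hc => hij (hinj hc))
    set η : Fin (m+3) := Fin.last (m+2) with hη
    set τ : Fin (m+3) := ⟨m+1, by omega⟩ with hτ
    have hτη : τ ≠ η := by
      intro hc
      have := congrArg Fin.val hc
      simp [hτ, hη, Fin.last] at this
    have h0η : (0 : Fin (m+3)) ≠ η := by
      intro hc
      have := congrArg Fin.val hc
      simp [hη, Fin.last] at this
    set PL : Fin (m+3) → ℝ := fun j => ∏ u ∈ (Finset.univ.erase j).erase η, (ξ j - ξ u)⁻¹ with hPL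
    set PR : Fin (m+3) → ℝ := fun j => ∏ u ∈ (Finset.univ.erase j).erase 0, (ξ j - ξ u)⁻¹ with hPR
    set Pf : Fin (m+3) → ℝ := fun j => ∏ u ∈ Finset.univ.erase j, (ξ j - ξ u)⁻¹ with hPf
    set f : Fin (m+3) → ℝ := fun j => (x - ξ 0) * PL j * tpow m (ξ j) x with hf
    set g : Fin (m+3) → ℝ := fun j => (ξ η - x) * PR j * tpow m (ξ j) x with hg
    -- relations between products
    have hPLf : ∀ j, j ≠ η → PL j = (ξ j - ξ η) * Pf j := by
      intro j hj
      have hmem : η ∈ Finset.univ.erase j := Finset.mem_erase.mpr ⟨fun hc => hj hc.symm, Finset.mem_univ _⟩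
      have := Finset.mul_prod_erase (Finset.univ.erase j) (fun u => (ξ j - ξ u)⁻¹) hmem
      rw [hPf]
      simp only
      rw [← this, ← mul_assoc, mul_inv_cancel₀ (hne j η hj), one_mul]
    have hPRf : ∀ j, j ≠ 0 → PR j = (ξ j - ξ 0) * Pf j := by
      intro j hj
      have hmem : (0 : Fin (m+3)) ∈ Finset.univ.erase j := Finset.mem_erase.mpr ⟨fun hc => hj hc.symm, Finset.mem_univ _⟩
      have := Finset.mul_prod_erase (Finset.univ.erase j) (fun u => (ξ j - ξ u)⁻¹) hmem
      rw [hPf]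
      simp only
      rw [← this, ← mul_assoc, mul_inv_cancel₀ (hne j 0 hj), one_mul]
    have hτ0 : τ ≠ 0 := by
      intro hc
      have := congrArg Fin.val hc
      simp [hτ] at this
    have hη0 : η ≠ 0 := Ne.symm h0η
    have hmapcs : Finset.univ.map Fin.castSuccEmb = Finset.univ.erase η := by
      rw [hη]
      conv_rhs => rw [Fin.univ_castSuccEmb]
      exact (Finset.erase_cons _).symm
    have hmapsucc : Finset.univ.map ⟨Fin.succ, Fin.succ_injective (m+2)⟩
        = Finset.univ.erase (0 : Fin (m+3)) := by
      conv_rhs => rw [Fin.univ_succ]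
      exact (Finset.erase_cons _).symm
    have hLmono : StrictMono (fun i : Fin (m+2) => ξ i.castSucc) :=
      hξ.comp (fun a b hab => Fin.castSucc_lt_castSucc_iff.mpr hab)
    have hRmono : StrictMono (fun i : Fin (m+2) => ξ i.succ) :=
      hξ.comp (fun a b hab => Fin.succ_lt_succ_iff.mpr hab)
    have hLco : ∀ i : Fin (m+2), bcoef m (fun i => ξ i.castSucc) i = (ξ τ - ξ 0) * PL i.castSucc := by
      intro i
      unfold bcoef
      have h1 : (Fin.last (m+1)).castSucc = τ := rfl
      have h2 : (0 : Fin (m+2)).castSucc = (0 : Fin (m+3)) := Fin.castSucc_zero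
      simp only [h1, h2]
      congr 1
      calc ∏ j ∈ Finset.univ.erase i, (ξ i.castSucc - ξ j.castSucc)⁻¹
          = ∏ u ∈ (Finset.univ.erase i).map Fin.castSuccEmb, (ξ i.castSucc - ξ u)⁻¹ := by
            rw [Finset.prod_map]
            rfl
        _ = ∏ u ∈ (Finset.univ.erase i.castSucc).erase η, (ξ i.castSucc - ξ u)⁻¹ := by
            rw [Finset.map_erase, hmapcs, Finset.erase_right_comm]
            rfl
        _ = PL i.castSucc := rfl
    have hRco : ∀ i : Fin (m+2), bcoef m (fun i => ξ i.succ) i = (ξ η - ξ 1) * PR i.succ := by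
      intro i
      unfold bcoef
      have h1 : (Fin.last (m+1)).succ = η := Fin.succ_last (m+1)
      have h2 : (0 : Fin (m+2)).succ = (1 : Fin (m+3)) := Fin.succ_zero_eq_one
      simp only [h1, h2]
      congr 1
      calc ∏ j ∈ Finset.univ.erase i, (ξ i.succ - ξ j.succ)⁻¹
          = ∏ u ∈ (Finset.univ.erase i).map ⟨Fin.succ, Fin.succ_injective (m+2)⟩,
              (ξ i.succ - ξ u)⁻¹ := by
            rw [Finset.prod_map]
            rfl
        _ = ∏ u ∈ (Finset.univ.erase i.succ).erase 0, (ξ i.succ - ξ u)⁻¹ := by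
            rw [Finset.map_erase, hmapsucc, Finset.erase_right_comm]
            rfl
        _ = PR i.succ := rfl
    have hDL : ξ τ - ξ 0 ≠ 0 := hne τ 0 hτ0
    have hDR : ξ η - ξ 1 ≠ 0 := hne η 1 (by
      intro hc
      have := congrArg Fin.val hc
      simp [hη, Fin.last] at this)
    have step1 : bspline (m+1) ξ x
        = (∑ i : Fin (m+2), f i.castSucc) + (∑ i : Fin (m+2), g i.succ) := by
      rw [bspline, ih _ hLmono x, ih _ hRmono x, Finset.mul_sum, Finset.mul_sum]
      congr 1
      · apply Finset.sum_congr rfl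
        intro i _
        rw [hLco i, hf]
        simp only
        have : (ξ ⟨m+1, by omega⟩ : ℝ) = ξ τ := rfl
        rw [this]
        field_simp
      · apply Finset.sum_congr rfl
        intro i _
        rw [hRco i, hg]
        simp only
        have : (ξ (Fin.last (m+2)) : ℝ) = ξ η := rfl
        rw [this]
        field_simp
    have sumL : ∑ i : Fin (m+2), f i.castSucc = (∑ j, f j) - f η := by
      rw [hη, Fin.sum_univ_castSucc (f := f)]
      ring
    have sumR : ∑ i : Fin (m+2), g i.succ = (∑ j, g j) - g 0 := by
      rw [Fin.sum_univ_succ (f := g)]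
      ring
    rw [step1, sumL, sumR]
    rw [show f η = ∑ j, if j = η then f j else 0 from (Fintype.sum_ite_eq' η f).symm,
        show g 0 = ∑ j, if j = (0 : Fin (m+3)) then g j else 0 from
          (Fintype.sum_ite_eq' 0 g).symm]
    rw [← Finset.sum_sub_distrib, ← Finset.sum_sub_distrib, ← Finset.sum_add_distrib]
    apply Finset.sum_congr rfl
    intro j _
    have htarget : bcoef (m+1) ξ j = (ξ η - ξ 0) * Pf j := rfl
    by_cases hj0 : j = 0
    · subst hj0
      rw [if_neg h0η, if_pos rfl, sub_zero, sub_self, add_zero, htarget, hf]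
      simp only
      rw [hPLf 0 h0η, ← tpow_succ m (ξ 0) x]
      ring
    · by_cases hjη : j = η
      · subst hjη
        rw [if_pos rfl, if_neg hj0, sub_self, sub_zero, zero_add, htarget, hg]
        simp only
        rw [hPRf η hη0, ← tpow_succ m (ξ η) x]
        ring
      · rw [if_neg hjη, if_neg hj0, sub_zero, sub_zero, htarget, hf, hg]
        simp only
        rw [hPLf j hjη, hPRf j hj0, ← tpow_succ m (ξ j) x]
        ring

lemma finiteDiff_sum (r : ℕ) (h : ℝ) {ι : Type*} (s : Finset ι) (c : ι → ℝ) (g : ι → ℝ → ℝ)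
    (x : ℝ) : finiteDiff r h (fun y => ∑ i ∈ s, c i * g i y) x
      = ∑ i ∈ s, c i * finiteDiff r h (g i) x := by
  unfold finiteDiff
  simp only [Finset.mul_sum]
  rw [Finset.sum_comm]
  apply Finset.sum_congr rfl
  intro i _
  apply Finset.sum_congr rfl
  intro j _
  ring

lemma measurable_finiteDiff (r : ℕ) (h : ℝ) {f : ℝ → ℝ} (hf : Measurable f) :
    Measurable (finiteDiff r h f) := by
  unfold finiteDiff
  exact Finset.measurable_sum _
    (fun j _ => ((hf.comp (measurable_id.add_const ((j:ℝ)*h))).const_mul _))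

/-- Pointwise bound, case `r ≤ k`. -/
lemma pointwise_A {k r : ℕ} {h a x : ℝ} (hrk : r ≤ k) (hh : 0 < h) (hh1 : h ≤ 1)
    (hx : 0 ≤ x) (ha1 : a ≤ 1) :
    |finiteDiff r h (tpow k a) x| ≤ 2^r * ((r:ℝ)+1)^k * h^r := by
  rcases le_or_gt a x with hax | hax
  · rw [finiteDiff_tpow_of_ge hh.le hax, abs_zero]
    positivity
  · rcases lt_or_ge (x + r*h) a with hlt | hge
    · exact abs_finiteDiff_tpow_poly_le hh.le hh1 hlt (by linarith)
    · refine (abs_finiteDiff_tpow_transition hh.le (by linarith)).trans ?_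
      have h1 : ((r:ℝ)*h)^k = (r:ℝ)^k * h^k := mul_pow _ _ _
      have h2 : h^k ≤ h^r := pow_le_pow_of_le_one hh.le hh1 hrk
      have h3 : (r:ℝ)^k ≤ ((r:ℝ)+1)^k := pow_le_pow_left₀ (Nat.cast_nonneg _) (by linarith) _
      calc (2:ℝ)^r * ((r:ℝ)*h)^k = 2^r * ((r:ℝ)^k * h^k) := by rw [h1]
        _ ≤ 2^r * (((r:ℝ)+1)^k * h^r) := by
            apply mul_le_mul_of_nonneg_left _ (by positivity)
            exact mul_le_mul h3 h2 (by positivity) (by positivity)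
        _ = 2^r * ((r:ℝ)+1)^k * h^r := by ring

/-- Pointwise bounds, case `r = k+1`. -/
lemma pointwise_B1 {k r : ℕ} {h a x : ℝ} (hrk : k < r) (hh : 0 < h) :
    |finiteDiff r h (tpow k a) x| ≤ 2^r * ((r:ℝ)*h)^k := by
  rcases le_or_gt a x with hax | hax
  · rw [finiteDiff_tpow_of_ge hh.le hax, abs_zero]; positivity
  · rcases lt_or_ge (x + r*h) a with hlt | hge
    · rw [finiteDiff_tpow_of_klt hrk hh.le hlt, abs_zero]; positivity
    · exact abs_finiteDiff_tpow_transition hh.le (by linarith)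

lemma pointwise_B2 {k r : ℕ} {h a x : ℝ} (hrk : k < r) (hh : 0 < h)
    (hx : x ∉ Icc (a - r*h) a) : finiteDiff r h (tpow k a) x = 0 := by
  rw [mem_Icc, not_and_or] at hx
  rcases hx with hx | hx
  · push_neg at hx
    exact finiteDiff_tpow_of_klt hrk hh.le (by linarith)
  · push_neg at hx
    exact finiteDiff_tpow_of_ge hh.le hx.le

lemma N_bound_A {k r : ℕ} {p : ℝ} (hrk : r ≤ k) (hp : 1 ≤ p) (c ξc : Fin (k+2) → ℝ)
    (hξa : ∀ i, ξc i ≤ 1) {h : ℝ} (hh : 0 < h) (hh1 : h ≤ 1) :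
    (∫ x in Ioo (0:ℝ) (1 - r*h),
        |finiteDiff r h (fun y => ∑ i, c i * tpow k (ξc i) y) x| ^ p) ^ (1/p)
      ≤ ((∑ i, |c i|) * (2^r * ((r:ℝ)+1)^k)) * h ^ (r:ℝ) := by
  have hp0 : (0:ℝ) < p := lt_of_lt_of_le one_pos hp
  set FD : ℝ → ℝ := finiteDiff r h (fun y => ∑ i, c i * tpow k (ξc i) y) with hFD
  set S : Set ℝ := Ioo (0:ℝ) (1 - r*h) with hS
  set B : ℝ := 2^r * ((r:ℝ)+1)^k * h^r with hB
  set C : ℝ := (∑ i, |c i|) * B with hC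
  have hsum0 : 0 ≤ ∑ i, |c i| := Finset.sum_nonneg fun i _ => abs_nonneg _
  have hB0 : 0 ≤ B := by positivity
  have hC0 : 0 ≤ C := mul_nonneg hsum0 hB0
  have hpt : ∀ x ∈ S, |FD x| ≤ C := by
    intro x hx
    rw [hFD, finiteDiff_sum]
    refine (Finset.abs_sum_le_sum_abs _ _).trans ?_
    rw [hC, Finset.sum_mul]
    apply Finset.sum_le_sum
    intro i _
    rw [abs_mul]
    exact mul_le_mul_of_nonneg_left (pointwise_A hrk hh hh1 hx.1.le (hξa i)) (abs_nonneg _)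
  have hfm : Measurable fun y => ∑ i, c i * tpow k (ξc i) y :=
    Finset.measurable_sum _ (fun i _ => (measurable_tpow _ _).const_mul _)
  have hmFD : Measurable fun x => |FD x| ^ p :=
    (Real.continuous_rpow_const hp0.le).measurable.comp (measurable_finiteDiff r h hfm).abs
  have hint1 : IntegrableOn (fun x => |FD x| ^ p) S := by
    refine Integrable.mono' (integrable_const (C^p)) hmFD.aestronglyMeasurable ?_
    refine (ae_restrict_iff' measurableSet_Ioo).mpr (ae_of_all _ fun x hx => ?_)
    rw [Real.norm_eq_abs, abs_of_nonneg (Real.rpow_nonneg (abs_nonneg _) _)]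
    exact Real.rpow_le_rpow (abs_nonneg _) (hpt x hx) hp0.le
  have hint2 : IntegrableOn (fun _ => C^p) S :=
    Iff.mpr integrableOn_const_iff (Or.inr measure_Ioo_lt_top)
  have key : (∫ x in S, |FD x| ^ p) ≤ ∫ x in S, C^p := by
    refine setIntegral_mono_on hint1 hint2 measurableSet_Ioo fun x hx => ?_
    exact Real.rpow_le_rpow (abs_nonneg _) (hpt x hx) hp0.le
  have hvol : (volume S).toReal ≤ 1 := by
    rw [hS, Real.volume_Ioo]
    rcases le_or_gt (1 - r*h) 0 with h0 | h0
    · rw [ENNReal.ofReal_eq_zero.mpr (by linarith)]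
      norm_num
    · rw [ENNReal.toReal_ofReal (by linarith)]
      have : (0:ℝ) ≤ (r:ℝ)*h := by positivity
      linarith
  have key2 : (∫ x in S, |FD x| ^ p) ≤ C^p := by
    refine key.trans ?_
    rw [setIntegral_const, smul_eq_mul]
    calc (volume S).toReal * C^p ≤ 1 * C^p := by
          exact mul_le_mul_of_nonneg_right hvol (Real.rpow_nonneg hC0 _)
      _ = C^p := one_mul _
  have hI0 : 0 ≤ ∫ x in S, |FD x| ^ p :=
    integral_nonneg fun x => Real.rpow_nonneg (abs_nonneg _) _
  calc (∫ x in S, |FD x| ^ p) ^ (1/p) ≤ (C^p) ^ (1/p) :=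
        Real.rpow_le_rpow hI0 key2 (by positivity)
    _ = C := by
        rw [← Real.rpow_mul hC0, mul_one_div_cancel (ne_of_gt hp0), Real.rpow_one]
    _ = ((∑ i, |c i|) * (2^r * ((r:ℝ)+1)^k)) * h ^ (r:ℝ) := by
        rw [hC, hB, ← Real.rpow_natCast h r]
        ring

lemma N_bound_B {k r : ℕ} {p : ℝ} (hrk : r = k+1) (hp : 1 ≤ p) (c ξc : Fin (k+2) → ℝ)
    {h : ℝ} (hh : 0 < h) :
    (∫ x in Ioo (0:ℝ) (1 - r*h),
        |finiteDiff r h (fun y => ∑ i, c i * tpow k (ξc i) y) x| ^ p) ^ (1/p)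
      ≤ ((∑ i, |c i|) * (2^r * (r:ℝ)^k * ((((k:ℝ)+2)) * r) ^ (1/p))) * h ^ ((k:ℝ) + 1/p) := by
  have hp0 : (0:ℝ) < p := lt_of_lt_of_le one_pos hp
  have hkr : k < r := by omega
  set FD : ℝ → ℝ := finiteDiff r h (fun y => ∑ i, c i * tpow k (ξc i) y) with hFD
  set S : Set ℝ := Ioo (0:ℝ) (1 - r*h) with hS
  set U : Set ℝ := ⋃ i, Icc (ξc i - r*h) (ξc i) with hU
  have hUm : MeasurableSet U := MeasurableSet.iUnion fun i => measurableSet_Icc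
  set C1 : ℝ := (∑ i, |c i|) * (2^r * ((r:ℝ)*h)^k) with hC1
  have hsum0 : 0 ≤ ∑ i, |c i| := Finset.sum_nonneg fun i _ => abs_nonneg _
  have hC10 : 0 ≤ C1 := mul_nonneg hsum0 (by positivity)
  have hpt1 : ∀ x, |FD x| ≤ C1 := by
    intro x
    rw [hFD, finiteDiff_sum]
    refine (Finset.abs_sum_le_sum_abs _ _).trans ?_
    rw [hC1, Finset.sum_mul]
    apply Finset.sum_le_sum
    intro i _
    rw [abs_mul]
    exact mul_le_mul_of_nonneg_left (pointwise_B1 hkr hh) (abs_nonneg _)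
  have hpt0 : ∀ x, x ∉ U → FD x = 0 := by
    intro x hx
    rw [hFD, finiteDiff_sum]
    apply Finset.sum_eq_zero
    intro i _
    rw [pointwise_B2 hkr hh (fun hc => hx (mem_iUnion.mpr ⟨i, hc⟩)), mul_zero]
  set G : ℝ → ℝ := U.indicator (fun _ => C1^p) with hG
  have hptG : ∀ x, |FD x| ^ p ≤ G x := by
    intro x
    by_cases hxU : x ∈ U
    · rw [hG, indicator_of_mem hxU]
      exact Real.rpow_le_rpow (abs_nonneg _) (hpt1 x) hp0.le
    · rw [hG, indicator_of_notMem hxU, hpt0 x hxU, abs_zero,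
        Real.zero_rpow (ne_of_gt hp0)]
  have hfm : Measurable fun y => ∑ i, c i * tpow k (ξc i) y :=
    Finset.measurable_sum _ (fun i _ => (measurable_tpow _ _).const_mul _)
  have hmFD : Measurable fun x => |FD x| ^ p :=
    (Real.continuous_rpow_const hp0.le).measurable.comp (measurable_finiteDiff r h hfm).abs
  have hint1 : IntegrableOn (fun x => |FD x| ^ p) S := by
    refine Integrable.mono' (integrable_const (C1^p)) hmFD.aestronglyMeasurable ?_
    refine ae_of_all _ fun x => ?_
    rw [Real.norm_eq_abs, abs_of_nonneg (Real.rpow_nonneg (abs_nonneg _) _)]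
    exact Real.rpow_le_rpow (abs_nonneg _) (hpt1 x) hp0.le
  have hintG : IntegrableOn G S := (integrable_const (C1^p)).indicator hUm
  have key : (∫ x in S, |FD x| ^ p) ≤ ∫ x in S, G x :=
    setIntegral_mono_on hint1 hintG measurableSet_Ioo fun x _ => hptG x
  have hμ : ((volume.restrict S) U).toReal ≤ ((k:ℝ)+2) * ((r:ℝ)*h) := by
    apply ENNReal.toReal_le_of_le_ofReal (by positivity)
    rw [Measure.restrict_apply hUm]
    refine le_trans (measure_mono inter_subset_left) ?_
    refine le_trans (measure_iUnion_fintype_le _ _) (le_of_eq ?_)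
    calc ∑ i, volume (Icc (ξc i - r*h) (ξc i))
        = ∑ _i : Fin (k+2), ENNReal.ofReal ((r:ℝ)*h) := by
          apply Finset.sum_congr rfl
          intro i _
          rw [Real.volume_Icc]
          congr 1
          ring
      _ = ((k+2 : ℕ) : ℝ≥0∞) * ENNReal.ofReal ((r:ℝ)*h) := by
          rw [Finset.sum_const, Finset.card_univ, Fintype.card_fin, nsmul_eq_mul]
      _ = ENNReal.ofReal (((k:ℝ)+2) * ((r:ℝ)*h)) := by
          rw [← ENNReal.ofReal_natCast, ← ENNReal.ofReal_mul (by positivity)]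
          congr 1
          push_cast
          ring
  have key2 : (∫ x in S, |FD x| ^ p) ≤ (((k:ℝ)+2) * ((r:ℝ)*h)) * C1^p := by
    refine key.trans ?_
    rw [hG, integral_indicator hUm, setIntegral_const, smul_eq_mul]
    exact mul_le_mul_of_nonneg_right hμ (Real.rpow_nonneg hC10 _)
  have hI0 : 0 ≤ ∫ x in S, |FD x| ^ p :=
    integral_nonneg fun x => Real.rpow_nonneg (abs_nonneg _) _
  calc (∫ x in S, |FD x| ^ p) ^ (1/p)
      ≤ ((((k:ℝ)+2) * ((r:ℝ)*h)) * C1^p) ^ (1/p) :=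
        Real.rpow_le_rpow hI0 key2 (by positivity)
    _ = (((k:ℝ)+2) * ((r:ℝ)*h)) ^ (1/p) * C1 := by
        rw [Real.mul_rpow (by positivity) (Real.rpow_nonneg hC10 _),
          ← Real.rpow_mul hC10, mul_one_div_cancel (ne_of_gt hp0), Real.rpow_one]
    _ = ((((k:ℝ)+2)) * (r:ℝ)) ^ (1/p) * h ^ (1/p) * C1 := by
        rw [show (((k:ℝ)+2)) * ((r:ℝ)*h) = ((((k:ℝ)+2)) * (r:ℝ)) * h by ring,
          Real.mul_rpow (by positivity) hh.le]
    _ = ((∑ i, |c i|) * (2^r * (r:ℝ)^k * ((((k:ℝ)+2)) * r) ^ (1/p))) * h ^ ((k:ℝ) + 1/p) := by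
        rw [hC1, Real.rpow_add hh, mul_pow, ← Real.rpow_natCast h k]
        ring

lemma N_zero {p : ℝ} (hp : 1 ≤ p) (r : ℕ) (f : ℝ → ℝ) {h : ℝ} (h1 : 1 ≤ (r:ℝ)*h) :
    (∫ x in Ioo (0:ℝ) (1 - r*h), |finiteDiff r h f x| ^ p) ^ (1/p) = 0 := by
  have hp0 : (0:ℝ) < p := lt_of_lt_of_le one_pos hp
  have hemp : Ioo (0:ℝ) (1 - r*h) = ∅ := Ioo_eq_empty (by intro hc; linarith)
  rw [hemp]
  simp only [Measure.restrict_empty, integral_zero_measure]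
  exact Real.zero_rpow (by positivity)

lemma modSmooth_nonneg (p : ℝ) (r : ℕ) (f : ℝ → ℝ) (t : ℝ) : 0 ≤ modSmooth p r f t := by
  apply Real.sSup_nonneg
  rintro y ⟨h, _, rfl⟩
  exact Real.rpow_nonneg (integral_nonneg fun x => Real.rpow_nonneg (abs_nonneg _) _) _

lemma modSmooth_le_of_N {p : ℝ} (hp : 1 ≤ p) {r : ℕ} (hr : 1 ≤ r) (f : ℝ → ℝ) {D β : ℝ}
    (hD : 0 ≤ D) (hβ : 0 < β)
    (hN : ∀ h : ℝ, 0 < h → h ≤ 1 →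
      (∫ x in Ioo (0:ℝ) (1 - r*h), |finiteDiff r h f x| ^ p) ^ (1/p) ≤ D * h ^ β)
    {t : ℝ} (ht : 0 < t) : modSmooth p r f t ≤ D * (min t 1) ^ β := by
  have hmin : 0 < min t 1 := lt_min ht one_pos
  apply Real.sSup_le _ (by positivity)
  rintro y ⟨h, hh, rfl⟩
  rcases le_or_gt h 1 with h1 | h1
  · refine (hN h hh.1 h1).trans ?_
    exact mul_le_mul_of_nonneg_left
      (Real.rpow_le_rpow hh.1.le (le_min hh.2 h1) hβ.le) hD
  · show (∫ x in Ioo (0:ℝ) (1 - r*h), |finiteDiff r h f x| ^ p) ^ (1/p) ≤ D * (min t 1) ^ β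
    rw [N_zero hp r f ?_]
    · positivity
    · have hr1 : (1:ℝ) ≤ (r:ℝ) := by exact_mod_cast hr
      nlinarith

lemma besov_finite_of_N {p q α : ℝ} (hp : 1 ≤ p) (hq : 1 ≤ q) (hα : 0 < α) {f : ℝ → ℝ}
    {D β : ℝ} (hD : 0 ≤ D) (hβα : α < β)
    (hN : ∀ h : ℝ, 0 < h → h ≤ 1 →
      (∫ x in Ioo (0:ℝ) (1 - (besovR α : ℕ)*h), |finiteDiff (besovR α) h f x| ^ p) ^ (1/p)
        ≤ D * h ^ β) :
    besovSeminorm p q α f < ⊤ := by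
  have hq0 : (0:ℝ) < q := lt_of_lt_of_le one_pos hq
  have hβ : 0 < β := hα.trans hβα
  have hr1 : 1 ≤ besovR α := Nat.le_add_left 1 _
  set r : ℕ := besovR α with hrdef
  set M : ℝ → ℝ := modSmooth p r f with hM
  have hM0 : ∀ t : ℝ, 0 ≤ M t := fun t => modSmooth_nonneg p r f t
  have hMle : ∀ t : ℝ, 0 < t → M t ≤ D * (min t 1) ^ β :=
    fun t ht => modSmooth_le_of_N hp hr1 f hD hβ hN ht
  unfold besovSeminorm
  rw [← hrdef, ← hM]
  refine ENNReal.rpow_lt_top_of_nonneg (by positivity) ?_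
  have hsplit : (Ioi (0:ℝ)) = Ioo 0 1 ∪ Ici 1 := by
    ext y
    simp only [mem_Ioi, mem_union, mem_Ioo, mem_Ici]
    constructor
    · intro hy
      rcases lt_or_ge y 1 with hc | hc
      · exact Or.inl ⟨hy, hc⟩
      · exact Or.inr hc
    · rintro (⟨h1, _⟩ | h1)
      · exact h1
      · linarith
  have hdisj : Disjoint (Ioo (0:ℝ) 1) (Ici (1:ℝ)) :=
    Set.disjoint_left.mpr fun y hy h1 => absurd h1 (not_le.mpr hy.2)
  rw [hsplit, lintegral_union measurableSet_Ici hdisj]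
  refine (ENNReal.add_lt_top.mpr ⟨?_, ?_⟩).ne
  · -- small t
    set g : ℝ → ℝ := fun t => D^q * t ^ ((β - α) * q - 1) with hg
    have hgint : IntegrableOn g (Ioo (0:ℝ) 1) := by
      have hbase : IntegrableOn (fun x : ℝ => x ^ ((β - α) * q - 1)) (Ioo (0:ℝ) 1) :=
        (intervalIntegral.integrableOn_Ioo_rpow_iff one_pos).mpr (by nlinarith)
      exact hbase.const_mul _
    refine lt_of_le_of_lt ?_ hgint.lintegral_lt_top
    apply lintegral_mono_ae
    refine (ae_restrict_iff' measurableSet_Ioo).mpr (ae_of_all _ fun t ht => ?_)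
    apply ENNReal.ofReal_le_ofReal
    have ht0 : 0 < t := ht.1
    have hmin : min t 1 = t := min_eq_left ht.2.le
    have step1 : t ^ (-α) * M t ≤ D * t ^ (β - α) := by
      have := hMle t ht0
      rw [hmin] at this
      calc t ^ (-α) * M t ≤ t ^ (-α) * (D * t ^ β) :=
            mul_le_mul_of_nonneg_left this (Real.rpow_nonneg ht0.le _)
        _ = D * t ^ (β - α) := by
            rw [show β - α = -α + β by ring, Real.rpow_add ht0]
            ring
    have step2 : (t ^ (-α) * M t) ^ q ≤ D^q * t ^ ((β - α) * q) := by
      calc (t ^ (-α) * M t) ^ q ≤ (D * t ^ (β - α)) ^ q :=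
            Real.rpow_le_rpow (mul_nonneg (Real.rpow_nonneg ht0.le _) (hM0 t)) step1 hq0.le
        _ = D^q * t ^ ((β - α) * q) := by
            rw [Real.mul_rpow hD (Real.rpow_nonneg ht0.le _), ← Real.rpow_mul ht0.le]
    calc (t ^ (-α) * M t) ^ q / t ≤ (D^q * t ^ ((β - α) * q)) / t := by
          exact (div_le_div_iff_of_pos_right ht0).mpr step2
      _ = g t := by
          rw [hg]
          simp only
          rw [mul_div_assoc, ← Real.rpow_sub_one (ne_of_gt ht0)]
  · -- large t
    set g : ℝ → ℝ := fun t => D^q * t ^ (-α * q - 1) with hg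
    have hgint : IntegrableOn g (Ici (1:ℝ)) := by
      have hbase : IntegrableOn (fun x : ℝ => x ^ (-α * q - 1)) (Ici (1:ℝ)) :=
        Iff.mpr integrableOn_Ici_iff_integrableOn_Ioi
          ((integrableOn_Ioi_rpow_iff one_pos).mpr (by nlinarith))
      exact hbase.const_mul _
    refine lt_of_le_of_lt ?_ hgint.lintegral_lt_top
    apply lintegral_mono_ae
    refine (ae_restrict_iff' measurableSet_Ici).mpr (ae_of_all _ fun t ht => ?_)
    apply ENNReal.ofReal_le_ofReal
    have ht0 : (0:ℝ) < t := lt_of_lt_of_le one_pos ht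
    have hmin : min t 1 = 1 := min_eq_right ht
    have step1 : t ^ (-α) * M t ≤ D * t ^ (-α : ℝ) := by
      have h2 := hMle t ht0
      rw [hmin, Real.one_rpow, mul_one] at h2
      calc t ^ (-α) * M t ≤ t ^ (-α) * D :=
            mul_le_mul_of_nonneg_left h2 (Real.rpow_nonneg ht0.le _)
        _ = D * t ^ (-α : ℝ) := mul_comm _ _
    have step2 : (t ^ (-α) * M t) ^ q ≤ D^q * t ^ (-α * q) := by
      calc (t ^ (-α) * M t) ^ q ≤ (D * t ^ (-α:ℝ)) ^ q :=
            Real.rpow_le_rpow (mul_nonneg (Real.rpow_nonneg ht0.le _) (hM0 t)) step1 hq0.le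
        _ = D^q * t ^ (-α * q) := by
            rw [Real.mul_rpow hD (Real.rpow_nonneg ht0.le _), ← Real.rpow_mul ht0.le]
    calc (t ^ (-α) * M t) ^ q / t ≤ (D^q * t ^ (-α * q)) / t := by
          exact (div_le_div_iff_of_pos_right ht0).mpr step2
      _ = g t := by
          rw [hg]
          simp only
          rw [mul_div_assoc, ← Real.rpow_sub_one (ne_of_gt ht0)]


end BsplineAux

/-- Theorem 1 of the paper: for `k ≥ 0`, a strictly increasing knot
vector in `[0,1]`, `1 ≤ p, q < ∞` and `0 < α < k + 1/p`, the B-spline basis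
function `B_k(·; ξ)` belongs to the Besov space `B^α_{p,q}([0,1])`. -/
theorem bspline_mem_besov (k : ℕ) (ξ : Fin (k + 2) → ℝ) (hξ : StrictMono ξ)
    (hξ0 : 0 ≤ ξ 0) (hξ1 : ξ (Fin.last (k + 1)) ≤ 1)
    (p q α : ℝ) (hp : 1 ≤ p) (hq : 1 ≤ q) (hα : 0 < α) (hαk : α < k + 1 / p) :
    memBesov p q α (bspline k ξ) := by
  have hp0 : (0:ℝ) < p := lt_of_lt_of_le one_pos hp
  set c : Fin (k+2) → ℝ := bcoef k ξ with hc
  have hfeq : bspline k ξ = fun y => ∑ i, c i * tpow k (ξ i) y :=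
    funext (bspline_rep k ξ hξ)
  have hξi0 : ∀ i, 0 ≤ ξ i := fun i => le_trans hξ0 (hξ.monotone (Fin.zero_le i))
  have hξi1 : ∀ i, ξ i ≤ 1 := fun i => le_trans (hξ.monotone (Fin.le_last i)) hξ1
  have hsum0 : 0 ≤ ∑ i, |c i| := Finset.sum_nonneg fun i _ => abs_nonneg _
  rw [memBesov, hfeq]
  constructor
  · haveI : IsFiniteMeasure (volume.restrict (Icc (0:ℝ) 1)) :=
      ⟨by rw [Measure.restrict_apply_univ]; exact measure_Icc_lt_top⟩
    have hfm : Measurable fun y => ∑ i, c i * tpow k (ξ i) y :=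
      Finset.measurable_sum _ fun i _ => (measurable_tpow _ _).const_mul _
    refine MemLp.of_bound hfm.aestronglyMeasurable (∑ i, |c i|) ?_
    refine (ae_restrict_iff' measurableSet_Icc).mpr (ae_of_all _ fun x hx => ?_)
    rw [Real.norm_eq_abs]
    refine (Finset.abs_sum_le_sum_abs _ _).trans ?_
    apply Finset.sum_le_sum
    intro i _
    rw [abs_mul]
    calc |c i| * |tpow k (ξ i) x| ≤ |c i| * 1 := by
          refine mul_le_mul_of_nonneg_left ?_ (abs_nonneg _)
          have := abs_tpow_le (k := k) (a := ξ i) (x := x) (c := 1) one_pos.le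
            (by linarith [hξi1 i, hx.1])
          rwa [one_pow] at this
      _ = |c i| := mul_one _
  · set r : ℕ := besovR α with hr
    have hα0 : (0:ℝ) ≤ α := hα.le
    have hrcast : (r:ℝ) = (⌊α⌋₊ : ℝ) + 1 := by rw [hr, besovR]; push_cast; ring
    have hαr : α < r := by rw [hrcast]; exact Nat.lt_floor_add_one α
    have hp1 : 1/p ≤ 1 := by rw [div_le_one hp0]; exact hp
    have hrk1 : r ≤ k + 1 := by
      have hfl : ⌊α⌋₊ < k + 1 := (Nat.floor_lt hα0).mpr (by push_cast; linarith)
      rw [hr, besovR]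
      omega
    rcases eq_or_lt_of_le hrk1 with hcase | hcase
    · -- case B : r = k+1
      refine besov_finite_of_N hp hq hα
        (D := (∑ i, |c i|) * (2^r * (r:ℝ)^k * ((((k:ℝ)+2)) * r) ^ (1/p)))
        (β := (k:ℝ) + 1/p) (mul_nonneg hsum0 (by positivity)) hαk ?_
      intro h hh _
      rw [← hr]
      exact N_bound_B hcase hp c ξ hh
    · -- case A : r ≤ k
      have hrk : r ≤ k := by omega
      refine besov_finite_of_N hp hq hα
        (D := (∑ i, |c i|) * (2^r * ((r:ℝ)+1)^k))
        (β := (r:ℝ)) (mul_nonneg hsum0 (by positivity)) hαr ?_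
      intro h hh hh1
      rw [← hr]
      exact N_bound_A hrk hp c ξ hξi1 hh hh1
end

section
/- Let 1 ≤ p < ∞ and ε > 0, and set ζ = (ε/2)^p. Then for all integers k, k' ≥ 0 and all strictly increasing knot vectors ξ ∈ ℝ^{k+2} and ξ' ∈ ℝ^{k'+2} whose ranges satisfy r(ξ) < ζ and r(ξ') < ζ, the two B-spline basis functions are L^p-close: ( ∫_ℝ |B_k(x; ξ) − B_{k'}(x; ξ')|^p dx )^{1/p} ≤ r(ξ)^{1/p} + r(ξ')^{1/p} < ε. -/
open MeasureTheory Set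
open scoped ENNReal

theorem bspline_eq_zero : ∀ (k : ℕ) (ξ : Fin (k + 2) → ℝ), Monotone ξ → ∀ x : ℝ,
    (x < ξ 0 ∨ ξ (Fin.last (k + 1)) ≤ x) → bspline k ξ x = 0
  | 0, ξ, hξ, x, hx => by
    simp only [bspline]
    rw [if_neg]
    rintro ⟨h1, h2⟩
    rcases hx with h | h
    · exact absurd h1 (not_le.mpr h)
    · exact absurd h2 (not_lt.mpr h)
  | (m + 1), ξ, hξ, x, hx => by
    have hm1 : Monotone (fun i : Fin (m + 2) => ξ i.castSucc) :=
      fun i j hij => hξ (by simpa using hij)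
    have hm2 : Monotone (fun i : Fin (m + 2) => ξ i.succ) :=
      fun i j hij => hξ (by simpa using hij)
    have h1 : bspline m (fun i => ξ i.castSucc) x = 0 := by
      apply bspline_eq_zero m _ hm1
      rcases hx with h | h
      · left; simpa using h
      · right
        refine le_trans ?_ h
        apply hξ
        simp [Fin.le_def]
    have h2 : bspline m (fun i => ξ i.succ) x = 0 := by
      apply bspline_eq_zero m _ hm2
      rcases hx with h | h
      · left
        refine lt_of_lt_of_le h ?_
        apply hξ
        simp [Fin.le_def]
      · right; simpa using h
    simp [bspline, h1, h2]

theorem bspline_nonneg : ∀ (k : ℕ) (ξ : Fin (k + 2) → ℝ), StrictMono ξ → ∀ x : ℝ,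
    0 ≤ bspline k ξ x
  | 0, ξ, hξ, x => by
    simp only [bspline]
    split <;> norm_num
  | (m + 1), ξ, hξ, x => by
    have hs1 : StrictMono (fun i : Fin (m + 2) => ξ i.castSucc) :=
      fun i j hij => hξ (by simpa using hij)
    have hs2 : StrictMono (fun i : Fin (m + 2) => ξ i.succ) :=
      fun i j hij => hξ (by simpa using hij)
    simp only [bspline]
    apply add_nonneg
    · rcases le_or_gt (ξ 0) x with h | h
      · apply mul_nonneg
        · apply div_nonneg (by linarith)
          have : ξ 0 < ξ ⟨m + 1, by omega⟩ := hξ (by simp [Fin.lt_def])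
          linarith
        · exact bspline_nonneg m _ hs1 x
      · rw [bspline_eq_zero m _ hs1.monotone x (Or.inl (by simpa using h))]
        simp
    · rcases le_or_gt x (ξ (Fin.last (m + 2))) with h | h
      · apply mul_nonneg
        · apply div_nonneg (by linarith)
          have : ξ 1 < ξ (Fin.last (m + 2)) := hξ (by simp [Fin.lt_def])
          linarith
        · exact bspline_nonneg m _ hs2 x
      · rw [bspline_eq_zero m _ hs2.monotone x (Or.inr (by simp only [Fin.succ_last]; exact h.le))]
        simp

theorem bspline_succ_def (m : ℕ) (ξ : Fin (m + 3) → ℝ) (x : ℝ) :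
    bspline (m + 1) ξ x =
      (x - ξ 0) / (ξ ⟨m + 1, by omega⟩ - ξ 0) * bspline m (fun i => ξ i.castSucc) x
      + (ξ (Fin.last (m + 2)) - x) / (ξ (Fin.last (m + 2)) - ξ 1) *
          bspline m (fun i => ξ i.succ) x := rfl

theorem indicator_sum (τ : ℕ → ℝ) (hτ : Monotone τ) (x : ℝ) : ∀ n : ℕ,
    (∑ i ∈ Finset.range (n + 1), if τ i ≤ x ∧ x < τ (i + 1) then (1 : ℝ) else 0)
      = if τ 0 ≤ x ∧ x < τ (n + 1) then 1 else 0
  | 0 => by rw [Finset.sum_range_one]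
  | (n + 1) => by
    rw [Finset.sum_range_succ, indicator_sum τ hτ x n]
    have h1 : τ (n + 1) ≤ τ (n + 2) := hτ (by omega)
    have h2 : τ 0 ≤ τ (n + 1) := hτ (by omega)
    split_ifs <;> simp_all <;> linarith

theorem bspline_partition : ∀ (k n : ℕ) (τ : ℕ → ℝ), StrictMono τ → k ≤ n →
    ∀ x : ℝ, τ k ≤ x → x < τ (n + 1) →
    ∑ i ∈ Finset.range (n + 1), bspline k (fun j => τ (i + j)) x = 1
  | 0, n, τ, hτ, hkn, x, h1, h2 => by
    have e : ∀ i ∈ Finset.range (n + 1),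
        bspline 0 (fun j : Fin 2 => τ (i + j)) x
          = if τ i ≤ x ∧ x < τ (i + 1) then (1 : ℝ) else 0 := by
      intro i _
      simp [bspline]
    rw [Finset.sum_congr rfl e, indicator_sum τ hτ.monotone x n, if_pos ⟨h1, h2⟩]
  | (k + 1), n, τ, hτ, hkn, x, h1, h2 => by
    set W : ℕ → ℝ := fun i => bspline k (fun j : Fin (k + 2) => τ (i + j)) x with hW
    set A : ℕ → ℝ := fun i => (x - τ i) / (τ (i + (k + 1)) - τ i) with hA
    have hwin : ∀ i, StrictMono (fun j : Fin (k + 2) => τ (i + j)) :=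
      fun i a b hab => hτ (Nat.add_lt_add_left hab i)
    have key : ∀ i ∈ Finset.range (n + 1),
        bspline (k + 1) (fun j : Fin (k + 3) => τ (i + j)) x
          = (A i * W i - A (i + 1) * W (i + 1)) + W (i + 1) := by
      intro i _
      rw [bspline_succ_def]
      have ec : (fun j : Fin (k + 2) => (fun j : Fin (k + 3) => τ (i + j)) j.castSucc)
          = fun j : Fin (k + 2) => τ (i + j) := by
        funext j; simp
      have es : (fun j : Fin (k + 2) => (fun j : Fin (k + 3) => τ (i + j)) j.succ)
          = fun j : Fin (k + 2) => τ (i + 1 + j) := by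
        funext j; simp only [Fin.val_succ]; congr 1; omega
      rw [ec, es]
      have hd1 : τ i < τ (i + ((k : ℕ) + 1)) := hτ (by omega)
      have hd2 : τ (i + 1) < τ (i + (k + 2)) := hτ (by omega)
      have d1 : τ (i + (k + 1)) - τ i ≠ 0 := sub_ne_zero.mpr hd1.ne'
      have d2 : τ (i + (k + 2)) - τ (i + 1) ≠ 0 := sub_ne_zero.mpr hd2.ne'
      have hv0 : ((0 : Fin (k + 3)) : ℕ) = 0 := rfl
      have hv1 : ((1 : Fin (k + 3)) : ℕ) = 1 := rfl
      have hτeq : τ (i + 1 + (k + 1)) = τ (i + (k + 2)) := by congr 1; omega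
      simp only [hA, hW, hv0, hv1, Fin.val_last, hτeq]
      have hWs : bspline k (fun j : Fin (k + 2) => τ (i + 1 + j)) x = W (i + 1) := rfl
      rw [hWs]
      have hW0' : bspline k (fun j : Fin (k + 2) => τ (i + j)) x = W i := rfl
      rw [hW0']
      simp only [Nat.add_zero]
      field_simp
      ring
    rw [Finset.sum_congr rfl key, Finset.sum_add_distrib,
      Finset.sum_range_sub' (fun i => A i * W i)]
    have hW0 : W 0 = 0 := by
      apply bspline_eq_zero k _ (hwin 0).monotone x
      right
      simpa using h1
    have hWn : W (n + 1) = 0 := by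
      apply bspline_eq_zero k _ (hwin (n + 1)).monotone x
      left
      simpa using h2
    have hsum : ∑ i ∈ Finset.range (n + 1), W (i + 1) = 1 := by
      have hτ' : StrictMono (fun m => τ (m + 1)) := fun a b hab => hτ (by omega)
      have := bspline_partition k n (fun m => τ (m + 1)) hτ' (by omega) x h1
        (h2.trans (hτ (by omega)))
      rw [← this]
      apply Finset.sum_congr rfl
      intro i _
      simp only [hW]
      congr 1
      funext j
      congr 1
      omega
    rw [hW0, hWn, hsum]
    ring

noncomputable def extKnots (k : ℕ) (ξ : Fin (k + 2) → ℝ) : ℕ → ℝ :=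
  fun j =>
    if h : j < k then ξ 0 + (j : ℝ) - (k : ℝ)
    else if h2 : j - k < k + 2 then ξ ⟨j - k, h2⟩
    else ξ (Fin.last (k + 1)) + (j : ℝ) - (2 * k + 1 : ℕ)

theorem extKnots_eq (k : ℕ) (ξ : Fin (k + 2) → ℝ) (j : Fin (k + 2)) :
    extKnots k ξ (k + j) = ξ j := by
  unfold extKnots
  rw [dif_neg (by omega), dif_pos (by omega)]
  congr 1
  exact Fin.ext (by simp)

theorem extKnots_strictMono (k : ℕ) (ξ : Fin (k + 2) → ℝ) (hξ : StrictMono ξ) :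
    StrictMono (extKnots k ξ) := by
  apply strictMono_nat_of_lt_succ
  intro j
  unfold extKnots
  have h0le : ∀ i : Fin (k + 2), ξ 0 ≤ ξ i := fun i => hξ.monotone (Fin.zero_le i)
  have hlast : ∀ i : Fin (k + 2), ξ i ≤ ξ (Fin.last (k + 1)) := fun i => hξ.monotone (Fin.le_last i)
  rcases lt_or_ge (j + 1) k with h | h
  · rw [dif_pos (by omega), dif_pos h]
    push_cast
    linarith
  rcases lt_or_ge j k with h2 | h2
  · -- j + 1 = k
    have hjk : j + 1 = k := by omega
    rw [dif_pos h2, dif_neg (by omega), dif_pos (by omega)]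
    have : ξ 0 ≤ ξ ⟨j + 1 - k, by omega⟩ := h0le _
    have hc : ((j : ℝ)) - k = -1 := by
      have : (k : ℝ) = (j : ℝ) + 1 := by exact_mod_cast congrArg Nat.cast hjk.symm
      linarith
    linarith
  rcases lt_or_ge (j + 1 - k) (k + 2) with h3 | h3
  · rw [dif_neg (by omega), dif_pos (by omega), dif_neg (by omega), dif_pos h3]
    exact hξ (by simp [Fin.lt_def]; omega)
  rcases lt_or_ge (j - k) (k + 2) with h4 | h4
  · -- j - k = k + 1, j + 1 - k = k + 2
    rw [dif_neg (by omega), dif_pos h4, dif_neg (by omega), dif_neg (by omega)]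
    have he : ξ ⟨j - k, h4⟩ = ξ (Fin.last (k + 1)) := by
      congr 1
      exact Fin.ext (by simp; omega)
    rw [he]
    have : ((j : ℝ) + 1) - (2 * k + 1 : ℕ) = 1 := by
      have : j = 2 * k + 1 := by omega
      subst this
      push_cast
      ring
    push_cast at this ⊢
    linarith
  · rw [dif_neg (by omega), dif_neg (by omega), dif_neg (by omega), dif_neg (by omega)]
    push_cast
    linarith

theorem bspline_le_one (k : ℕ) (ξ : Fin (k + 2) → ℝ) (hξ : StrictMono ξ) (x : ℝ) :
    bspline k ξ x ≤ 1 := by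
  rcases lt_or_ge x (ξ 0) with h | h
  · rw [bspline_eq_zero k ξ hξ.monotone x (Or.inl h)]; norm_num
  rcases le_or_gt (ξ (Fin.last (k + 1))) x with h2 | h2
  · rw [bspline_eq_zero k ξ hξ.monotone x (Or.inr h2)]; norm_num
  have hτ := extKnots_strictMono k ξ hξ
  have e0 : extKnots k ξ k = ξ 0 := by simpa using extKnots_eq k ξ 0
  have elast : extKnots k ξ (2 * k + 1) = ξ (Fin.last (k + 1)) := by
    have h := extKnots_eq k ξ (Fin.last (k + 1))
    rw [show k + ((Fin.last (k + 1)) : ℕ) = 2 * k + 1 by rw [Fin.val_last]; omega] at h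
    exact h
  have hpart := bspline_partition k (2 * k) (extKnots k ξ) hτ (by omega) x
    (by rw [e0]; exact h) (by rw [elast]; exact h2)
  have hterm : bspline k ξ x = bspline k (fun j : Fin (k + 2) => extKnots k ξ (k + j)) x := by
    congr 1
    funext j
    exact (extKnots_eq k ξ j).symm
  have hle := Finset.single_le_sum
    (f := fun i => bspline k (fun j : Fin (k + 2) => extKnots k ξ (i + j)) x)
    (fun i _ => bspline_nonneg k _ (fun a b hab => hτ (Nat.add_lt_add_left hab i)) x)
    (Finset.mem_range.mpr (by omega : k < 2 * k + 1))
  rw [hterm]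
  exact le_of_le_of_eq hle hpart

theorem bspline_measurable : ∀ (k : ℕ) (ξ : Fin (k + 2) → ℝ), Measurable (bspline k ξ)
  | 0, ξ => by
    have : bspline 0 ξ = (Set.Ico (ξ 0) (ξ 1)).indicator (fun _ => (1 : ℝ)) := by
      funext x
      simp [bspline, Set.indicator, Set.mem_Ico]
    rw [this]
    exact measurable_const.indicator measurableSet_Ico
  | (m + 1), ξ => by
    have e : bspline (m + 1) ξ = fun x =>
        (x - ξ 0) / (ξ ⟨m + 1, by omega⟩ - ξ 0) * bspline m (fun i => ξ i.castSucc) x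
        + (ξ (Fin.last (m + 2)) - x) / (ξ (Fin.last (m + 2)) - ξ 1) *
            bspline m (fun i => ξ i.succ) x := rfl
    rw [e]
    apply Measurable.add
    · exact ((measurable_id.sub_const (ξ 0)).div_const _).mul (bspline_measurable m _)
    · exact ((measurable_const.sub measurable_id).div_const _).mul (bspline_measurable m _)

theorem bspline_eLpNorm_le (p : ℝ) (hp : 1 ≤ p) (k : ℕ) (ξ : Fin (k + 2) → ℝ)
    (hξ : StrictMono ξ) :
    eLpNorm (bspline k ξ) (ENNReal.ofReal p) volume ≤
      ENNReal.ofReal ((ξ (Fin.last (k + 1)) - ξ 0) ^ (1 / p)) := by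
  have hp0 : 0 < p := by linarith
  have hq0 : (ENNReal.ofReal p) ≠ 0 := (ENNReal.ofReal_pos.mpr hp0).ne'
  have hqt : (ENNReal.ofReal p) ≠ ⊤ := ENNReal.ofReal_ne_top
  have h1 : ∀ x, ‖bspline k ξ x‖ ≤
      ‖(Set.Ico (ξ 0) (ξ (Fin.last (k + 1)))).indicator (fun _ => (1 : ℝ)) x‖ := by
    intro x
    by_cases hx : x ∈ Set.Ico (ξ 0) (ξ (Fin.last (k + 1)))
    · rw [Set.indicator_of_mem hx]
      rw [Real.norm_eq_abs, Real.norm_eq_abs, abs_of_nonneg (bspline_nonneg k ξ hξ x), abs_one]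
      exact bspline_le_one k ξ hξ x
    · rw [Set.indicator_of_notMem hx]
      have hz : x < ξ 0 ∨ ξ (Fin.last (k + 1)) ≤ x := by
        rw [Set.mem_Ico] at hx
        push_neg at hx
        rcases lt_or_ge x (ξ 0) with h | h
        · exact Or.inl h
        · exact Or.inr (hx h)
      rw [bspline_eq_zero k ξ hξ.monotone x hz]
  calc eLpNorm (bspline k ξ) (ENNReal.ofReal p) volume
      ≤ eLpNorm ((Set.Ico (ξ 0) (ξ (Fin.last (k + 1)))).indicator (fun _ => (1 : ℝ)))
        (ENNReal.ofReal p) volume := eLpNorm_mono h1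
    _ = ‖(1 : ℝ)‖₊ * volume (Set.Ico (ξ 0) (ξ (Fin.last (k + 1)))) ^
          (1 / (ENNReal.ofReal p).toReal) :=
        eLpNorm_indicator_const measurableSet_Ico hq0 hqt
    _ = ENNReal.ofReal ((ξ (Fin.last (k + 1)) - ξ 0) ^ (1 / p)) := by
        rw [Real.volume_Ico, ENNReal.toReal_ofReal hp0.le,
          ENNReal.ofReal_rpow_of_nonneg (sub_nonneg.mpr ((hξ.monotone (Fin.zero_le _))))
            (by positivity : (0:ℝ) ≤ 1 / p)]
        simp

/-- with `ζ = (ε/2)^p`, any two B-spline basis functions whose knot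
ranges are `< ζ` are `L^p`-close:
`‖B_k(·; ξ) − B_{k'}(·; ξ')‖_p ≤ r(ξ)^{1/p} + r(ξ')^{1/p} < ε`. -/
theorem bspline_lp_close_of_small_range (p ε : ℝ) (hp : 1 ≤ p) (hε : 0 < ε)
    (ζ : ℝ) (hζ : ζ = (ε / 2) ^ p)
    (k k' : ℕ) (ξ : Fin (k + 2) → ℝ) (ξ' : Fin (k' + 2) → ℝ)
    (hξ : StrictMono ξ) (hξ' : StrictMono ξ')
    (hr : ξ (Fin.last (k + 1)) - ξ 0 < ζ) (hr' : ξ' (Fin.last (k' + 1)) - ξ' 0 < ζ) :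
    (∫ x : ℝ, |bspline k ξ x - bspline k' ξ' x| ^ p) ^ (1 / p) ≤
        (ξ (Fin.last (k + 1)) - ξ 0) ^ (1 / p) +
          (ξ' (Fin.last (k' + 1)) - ξ' 0) ^ (1 / p) ∧
      (ξ (Fin.last (k + 1)) - ξ 0) ^ (1 / p) +
          (ξ' (Fin.last (k' + 1)) - ξ' 0) ^ (1 / p) < ε := by
  have hp0 : 0 < p := by linarith
  have hpne : p ≠ 0 := hp0.ne'
  have hq0 : (ENNReal.ofReal p) ≠ 0 := (ENNReal.ofReal_pos.mpr hp0).ne'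
  have hqt : ENNReal.ofReal p ≠ ⊤ := ENNReal.ofReal_ne_top
  have hq1 : 1 ≤ ENNReal.ofReal p := ENNReal.one_le_ofReal.mpr hp
  set r := ξ (Fin.last (k + 1)) - ξ 0 with hrdef
  set r' := ξ' (Fin.last (k' + 1)) - ξ' 0 with hrdef'
  have hr0 : 0 < r := sub_pos.mpr (hξ (by simp [Fin.lt_def]))
  have hr0' : 0 < r' := sub_pos.mpr (hξ' (by simp [Fin.lt_def]))
  have hf := bspline_eLpNorm_le p hp k ξ hξ
  have hg := bspline_eLpNorm_le p hp k' ξ' hξ'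
  have hfm : MemLp (bspline k ξ) (ENNReal.ofReal p) volume :=
    ⟨(bspline_measurable k ξ).aestronglyMeasurable, lt_of_le_of_lt hf ENNReal.ofReal_lt_top⟩
  have hgm : MemLp (bspline k' ξ') (ENNReal.ofReal p) volume :=
    ⟨(bspline_measurable k' ξ').aestronglyMeasurable, lt_of_le_of_lt hg ENNReal.ofReal_lt_top⟩
  have htri := eLpNorm_sub_le hfm.aestronglyMeasurable hgm.aestronglyMeasurable hq1
  have heq := (hfm.sub hgm).eLpNorm_eq_integral_rpow_norm hq0 hqt
  have heq2 : eLpNorm (bspline k ξ - bspline k' ξ') (ENNReal.ofReal p) volume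
      = ENNReal.ofReal ((∫ x : ℝ, |bspline k ξ x - bspline k' ξ' x| ^ p) ^ (1 / p)) := by
    rw [heq, ENNReal.toReal_ofReal hp0.le]
    rw [one_div]
    congr 2
  have hcomb : eLpNorm (bspline k ξ - bspline k' ξ') (ENNReal.ofReal p) volume
      ≤ ENNReal.ofReal (r ^ (1 / p) + r' ^ (1 / p)) := by
    refine htri.trans ?_
    rw [ENNReal.ofReal_add (by positivity) (by positivity)]
    exact add_le_add hf hg
  constructor
  · rw [heq2] at hcomb
    exact (ENNReal.ofReal_le_ofReal_iff (by positivity)).mp hcomb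
  · have he : ((ε / 2 : ℝ) ^ p) ^ (1 / p) = ε / 2 := by
      rw [← Real.rpow_mul (by positivity), mul_one_div, div_self hpne, Real.rpow_one]
    have h2 : r ^ (1 / p) < ε / 2 := by
      have h := Real.rpow_lt_rpow hr0.le (hζ ▸ hr) (by positivity : (0:ℝ) < 1 / p)
      rwa [he] at h
    have h2' : r' ^ (1 / p) < ε / 2 := by
      have h := Real.rpow_lt_rpow hr0'.le (hζ ▸ hr') (by positivity : (0:ℝ) < 1 / p)
      rwa [he] at h
    linarith
end
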